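/- Let r, p, q, k ∈ ℕ with r ≥ 2 and r·q ≤ p. Let T = Σ_{i+rj≤p, j≤q, i+j≤k} M_{f_{ij}} ∘ D_x^i ∘ D_y^j (f_{ij} ∈ R) be an operator which preserves 𝒮^r_{p,q} and has nonpositive y-degree. Then there exists P in the ℂ-linear span of all compositions of at most k elements of {W¹, …, W^{5+r}} (the empty composition being the identity) such that T(v) = P(v) for every v ∈ 𝒮^r_{p,q}; moreover, if k ≤ q then T = P as endomorphisms of R. -/

import Mathlib

noncomputable section

open MvPolynomial

/-- The bivariate polynomial ring `R = ℂ[x,y]`. -/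
abbrev R2 : Type := MvPolynomial (Fin 2) ℂ

/-- The variable `x`. -/
def Xv : R2 := X 0

/-- The variable `y`. -/
def Yv : R2 := X 1

/-- The partial derivative `∂_x` as a `ℂ`-linear endomorphism. -/
def Dx : Module.End ℂ R2 := (pderiv (0 : Fin 2)).toLinearMap

/-- The partial derivative `∂_y` as a `ℂ`-linear endomorphism. -/
def Dy : Module.End ℂ R2 := (pderiv (1 : Fin 2)).toLinearMap

/-- Multiplication by `f` as an endomorphism. -/
def Mf (f : R2) : Module.End ℂ R2 := LinearMap.mulLeft ℂ f

/-- All compositions (products) of at most `k` elements of `S`; the empty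
composition is the identity. -/
def prodsLE (k : ℕ) (S : Set (Module.End ℂ R2)) : Set (Module.End ℂ R2) :=
  {T | ∃ l : List (Module.End ℂ R2), l.length ≤ k ∧ (∀ a ∈ l, a ∈ S) ∧ l.prod = T}

/-- The rectangular module `ℛ_{n,m}`. -/
def Rmod (n m : ℕ) : Submodule ℂ R2 :=
  Submodule.span ℂ {P : R2 | ∃ i j : ℕ, i ≤ n ∧ j ≤ m ∧ P = Xv ^ i * Yv ^ j}

/-- The triangular module `𝒯ₙ`. -/
def Tmod (n : ℕ) : Submodule ℂ R2 :=
  Submodule.span ℂ {P : R2 | ∃ i j : ℕ, i + j ≤ n ∧ P = Xv ^ i * Yv ^ j}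

/-- The staircase module `𝒮^r_{p,q}`. -/
def Smod (r p q : ℕ) : Submodule ℂ R2 :=
  Submodule.span ℂ {P : R2 | ∃ i j : ℕ, i + r * j ≤ p ∧ j ≤ q ∧ P = Xv ^ i * Yv ^ j}

/-- An endomorphism has nonpositive `y`-degree if it maps each monomial `xᵃyᵇ`
into the span of the monomials `x^c y^e` with `e ≤ b`. -/
def NonposY (T : Module.End ℂ R2) : Prop :=
  ∀ a b : ℕ, T (Xv ^ a * Yv ^ b) ∈
    Submodule.span ℂ {P : R2 | ∃ c e : ℕ, e ≤ b ∧ P = Xv ^ c * Yv ^ e}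

/-- `W¹ = D_x`. -/
def W1 : Module.End ℂ R2 := Dx

/-- `W² = M_{x²}∘D_x + r·M_{xy}∘D_y − p·M_x`. -/
def W2 (r p : ℕ) : Module.End ℂ R2 :=
  Mf (Xv ^ 2) * Dx + (r : ℂ) • (Mf (Xv * Yv) * Dy) - (p : ℂ) • Mf Xv

/-- `W³ = M_x∘D_x − (p/2)·id`. -/
def W3 (p : ℕ) : Module.End ℂ R2 := Mf Xv * Dx - ((p : ℂ) / 2) • 1

/-- `W⁴ = M_y∘D_y`. -/
def W4 : Module.End ℂ R2 := Mf Yv * Dy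

/-- `W^{5+i} = M_{xⁱ}∘D_y`. -/
def W5i (i : ℕ) : Module.End ℂ R2 := Mf (Xv ^ i) * Dy

/-- The generating set `{W¹, …, W^{5+r}}` of the realization `𝔤^{24,r}_p`. -/
def Wset (r p : ℕ) : Set (Module.End ℂ R2) :=
  {W1, W2 r p, W3 p, W4} ∪ {T | ∃ i ≤ r, T = W5i i}

/-- The staircase index set `{(i,j) : i + r·j ≤ p, j ≤ q}`. -/
def sIdx (r p q : ℕ) : Finset (ℕ × ℕ) :=
  (Finset.range (p + 1) ×ˢ Finset.range (q + 1)).filter (fun ij => ij.1 + r * ij.2 ≤ p)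
namespace S13
open Finset MvPolynomial

/-! ### Falling factorials over ℂ -/

def ffc (z : ℤ) (n : ℕ) : ℂ := ∏ i ∈ Finset.range n, ((z : ℂ) - (i : ℂ))

lemma ffc_zero (z : ℤ) : ffc z 0 = 1 := by simp [ffc]

lemma ffc_succ (z : ℤ) (n : ℕ) : ffc z (n+1) = ffc z n * ((z:ℂ) - (n:ℂ)) := by
  simp [ffc, Finset.prod_range_succ]

lemma ffc_succ' (z : ℤ) (n : ℕ) : ffc z (n+1) = (z:ℂ) * ffc (z-1) n := by
  simp only [ffc]
  rw [Finset.prod_range_succ']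
  have h : ∀ x ∈ Finset.range n, ((z:ℂ) - (((x:ℕ)+1 : ℕ):ℂ)) = ((z - 1 : ℤ):ℂ) - (x:ℂ) := by
    intro x _; push_cast; ring
  rw [Finset.prod_congr rfl h]
  push_cast
  ring

lemma ffc_split (z : ℤ) (t n : ℕ) :
    ffc z (t + n) = ffc z t * ∏ s ∈ Finset.range n, ((z:ℂ) - (t:ℂ) - (s:ℂ)) := by
  rw [ffc, Finset.prod_range_add, ffc]
  congr 1
  apply Finset.prod_congr rfl
  intro i _
  push_cast
  ring

lemma ffc_nat_lt {a n : ℕ} (h : a < n) : ffc (a:ℤ) n = 0 := by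
  apply Finset.prod_eq_zero (Finset.mem_range.2 h)
  push_cast
  ring

lemma ffc_nat_ne {a n : ℕ} (h : n ≤ a) : ffc (a:ℤ) n ≠ 0 := by
  apply Finset.prod_ne_zero_iff.2
  intro i hi
  have hi' : i < n := Finset.mem_range.1 hi
  have : i < a := lt_of_lt_of_le hi' h
  intro hc
  have : (a:ℂ) = (i:ℂ) := by linear_combination hc
  exact absurd (Nat.cast_injective this) (by omega)

lemma cast_descFactorial (a c : ℕ) : ((a.descFactorial c : ℕ) : ℂ) = ffc (a:ℤ) c := by
  induction c with
  | zero => simp [ffc]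
  | succ c ih =>
    rcases lt_or_ge a (c+1) with h | h
    · rw [Nat.descFactorial_eq_zero_iff_lt.2 h, ffc_nat_lt h]
      simp
    · rw [Nat.descFactorial_succ, ffc_succ]
      push_cast [Nat.cast_sub (by omega : c ≤ a)]
      rw [ih]
      ring

/-! ### Monomials -/

def fs (a b : ℕ) : Fin 2 →₀ ℕ := Finsupp.single 0 a + Finsupp.single 1 b

@[simp] lemma fs_apply0 (a b : ℕ) : fs a b 0 = a := by simp [fs]

@[simp] lemma fs_apply1 (a b : ℕ) : fs a b 1 = b := by
  simp [fs, Finsupp.single_apply]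

lemma eq_fs (s : Fin 2 →₀ ℕ) : s = fs (s 0) (s 1) := by
  ext i
  fin_cases i <;> simp

lemma fs_inj {a b a' b' : ℕ} (h : fs a b = fs a' b') : a = a' ∧ b = b' := by
  constructor
  · have := congrArg (fun g => g 0) h; simpa using this
  · have := congrArg (fun g => g 1) h; simpa using this

def mono (a b : ℕ) : R2 := monomial (fs a b) 1

lemma XY_eq_mono (a b : ℕ) : Xv ^ a * Yv ^ b = mono a b := by
  rw [Xv, Yv, X_pow_eq_monomial, X_pow_eq_monomial, monomial_mul, mono, fs]
  simp

def monoZ (x y : ℤ) : R2 := if 0 ≤ x ∧ 0 ≤ y then mono x.toNat y.toNat else 0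

@[simp] lemma monoZ_natCast (a b : ℕ) : monoZ (a:ℤ) (b:ℤ) = mono a b := by
  simp [monoZ]

lemma coeff_mono (s : Fin 2 →₀ ℕ) (a b : ℕ) :
    coeff s (mono a b) = if fs a b = s then 1 else 0 := by
  rw [mono, coeff_monomial]

end S13
namespace S13
open Finset MvPolynomial

/-! ### Actions of basic operators on monomials -/

lemma Dx_mono (a b : ℕ) : Dx (mono a b) = (a : ℂ) • mono (a - 1) b := by
  rw [Dx, mono]
  show pderiv 0 (monomial (fs a b) 1) = _
  rw [pderiv_monomial]
  cases a with
  | zero => simp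
  | succ a =>
    have h : fs (a+1) b - Finsupp.single 0 1 = fs a b := by
      ext i; fin_cases i <;> simp [fs, Finsupp.single_apply]
    rw [h]
    simp [mono, smul_monomial]

lemma Dy_mono (a b : ℕ) : Dy (mono a b) = (b : ℂ) • mono a (b - 1) := by
  rw [Dy, mono]
  show pderiv 1 (monomial (fs a b) 1) = _
  rw [pderiv_monomial]
  cases b with
  | zero => simp
  | succ b =>
    have h : fs a (b+1) - Finsupp.single 1 1 = fs a b := by
      ext i; fin_cases i <;> simp [fs, Finsupp.single_apply]
    rw [h]
    simp [mono, smul_monomial]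

lemma Dx_pow_mono (c a b : ℕ) :
    (Dx ^ c) (mono a b) = ((a.descFactorial c : ℕ) : ℂ) • mono (a - c) b := by
  induction c generalizing a with
  | zero => simp
  | succ c ih =>
    rw [pow_succ', Module.End.mul_apply, ih, map_smul, Dx_mono, smul_smul]
    rw [show a - c - 1 = a - (c+1) by omega]
    congr 1
    rw [Nat.descFactorial_succ]
    rcases lt_or_ge a c with h | h
    · rw [Nat.descFactorial_eq_zero_iff_lt.2 h]
      simp
    · push_cast [Nat.cast_sub h]
      ring

lemma Dy_pow_mono (d a b : ℕ) :
    (Dy ^ d) (mono a b) = ((b.descFactorial d : ℕ) : ℂ) • mono a (b - d) := by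
  induction d generalizing b with
  | zero => simp
  | succ d ih =>
    rw [pow_succ', Module.End.mul_apply, ih, map_smul, Dy_mono, smul_smul]
    rw [show b - d - 1 = b - (d+1) by omega]
    congr 1
    rw [Nat.descFactorial_succ]
    rcases lt_or_ge b d with h | h
    · rw [Nat.descFactorial_eq_zero_iff_lt.2 h]
      simp
    · push_cast [Nat.cast_sub h]
      ring

lemma mono_mul_mono (α β a b : ℕ) : mono α β * mono a b = mono (α + a) (β + b) := by
  have h : fs α β + fs a b = fs (α + a) (β + b) := by
    ext i; fin_cases i <;> simp
  rw [mono, mono, mono, monomial_mul, h, mul_one]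

lemma Mf_mono (α β a b : ℕ) : Mf (mono α β) (mono a b) = mono (α + a) (β + b) := by
  rw [Mf]
  show mono α β * mono a b = _
  exact mono_mul_mono α β a b

/-! ### Elementary operator action -/

lemma elem_action (s : Fin 2 →₀ ℕ) (μ : ℂ) (c d a b : ℕ) :
    (Mf (monomial s μ) * Dx ^ c * Dy ^ d) (mono a b)
      = (μ * ffc a c * ffc b d) • mono (a - c + s 0) (b - d + s 1) := by
  have hmon : monomial s μ = μ • mono (s 0) (s 1) := by
    rw [mono, smul_monomial, smul_eq_mul, mul_one]
    conv_lhs => rw [eq_fs s]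
  rw [Module.End.mul_apply, Module.End.mul_apply, Dy_pow_mono, map_smul, Dx_pow_mono,
    map_smul, map_smul, hmon]
  have : Mf (μ • mono (s 0) (s 1)) = μ • Mf (mono (s 0) (s 1)) := by
    refine LinearMap.ext fun z => ?_
    show (μ • mono (s 0) (s 1)) * z = μ • (mono (s 0) (s 1) * z)
    rw [smul_mul_assoc]
  rw [this]
  rw [LinearMap.smul_apply, Mf_mono]
  rw [smul_smul, smul_smul, cast_descFactorial, cast_descFactorial]
  rw [show s 0 + (a - c) = a - c + s 0 by omega, show s 1 + (b - d) = b - d + s 1 by omega]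
  ring_nf

/-! ### Generator actions -/

lemma Xvpow_mul_mono (i a b : ℕ) : Xv ^ i * mono a b = mono (a+i) b := by
  have hx : Xv ^ i = mono i 0 := by
    rw [Xv, X_pow_eq_monomial, mono, fs]; simp
  rw [hx, mono_mul_mono]
  congr 1 <;> omega

lemma Xv_mul_mono (a b : ℕ) : Xv * mono a b = mono (a+1) b := by
  rw [show Xv = Xv ^ 1 by ring, Xvpow_mul_mono]

lemma Yv_mul_mono (a b : ℕ) : Yv * mono a b = mono a (b+1) := by
  have hy : Yv = mono 0 1 := by
    rw [Yv, mono, fs]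
    simp [X]
  rw [hy, mono_mul_mono]
  congr 1 <;> omega

lemma W1_mono (a b : ℕ) : W1 (mono a b) = (a : ℂ) • monoZ ((a:ℤ) - 1) (b:ℤ) := by
  rw [W1, Dx_mono]
  cases a with
  | zero => simp
  | succ a =>
    have : ((a+1 : ℕ):ℤ) - 1 = ((a:ℕ):ℤ) := by omega
    rw [this, monoZ_natCast]
    rfl

lemma W3_mono (p : ℕ) (a b : ℕ) : W3 p (mono a b) = ((a:ℂ) - (p:ℂ)/2) • mono a b := by
  have h1 : Mf Xv (Dx (mono a b)) = (a:ℂ) • mono a b := by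
    rw [Dx_mono, map_smul, Mf]
    cases a with
    | zero => simp
    | succ a =>
      show (((a+1:ℕ)):ℂ) • (Xv * mono (a+1-1) b) = _
      rw [Nat.add_sub_cancel, Xv_mul_mono]
  rw [W3, LinearMap.sub_apply, Module.End.mul_apply, h1, LinearMap.smul_apply,
    Module.End.one_apply, sub_smul]

lemma W4_mono (a b : ℕ) : W4 (mono a b) = (b : ℂ) • mono a b := by
  rw [W4, Module.End.mul_apply, Dy_mono, map_smul, Mf]
  cases b with
  | zero => simp
  | succ b =>
    show (((b+1:ℕ)):ℂ) • (Yv * mono a (b+1-1)) = _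
    rw [Nat.add_sub_cancel, Yv_mul_mono]

lemma W5i_mono (i a b : ℕ) : W5i i (mono a b) = (b : ℂ) • monoZ ((a:ℤ)+(i:ℤ)) ((b:ℤ)-1) := by
  rw [W5i, Module.End.mul_apply, Dy_mono, map_smul, Mf]
  cases b with
  | zero => simp
  | succ b =>
    show (((b+1:ℕ)):ℂ) • (Xv ^ i * mono a (b+1-1)) = _
    rw [Nat.add_sub_cancel, Xvpow_mul_mono]
    rw [show ((a:ℕ):ℤ) + (i:ℤ) = ((a + i : ℕ):ℤ) by omega,
      show ((b+1 : ℕ):ℤ) - 1 = ((b:ℕ):ℤ) by omega, monoZ_natCast]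

lemma W2_mono (r p : ℕ) (a b : ℕ) :
    W2 r p (mono a b) = ((a:ℂ) + (r:ℂ)*(b:ℂ) - (p:ℂ)) • mono (a+1) b := by
  have h1 : (Mf (Xv ^ 2) * Dx) (mono a b) = (a:ℂ) • mono (a+1) b := by
    rw [Module.End.mul_apply, Dx_mono, map_smul, Mf]
    cases a with
    | zero => simp
    | succ a =>
      show (((a+1:ℕ)):ℂ) • (Xv ^ 2 * mono (a+1-1) b) = _
      rw [Nat.add_sub_cancel, Xvpow_mul_mono]
  have h2 : (Mf (Xv * Yv) * Dy) (mono a b) = (b:ℂ) • mono (a+1) b := by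
    rw [Module.End.mul_apply, Dy_mono, map_smul, Mf]
    cases b with
    | zero => simp
    | succ b =>
      show (((b+1:ℕ)):ℂ) • (Xv * Yv * mono a (b+1-1)) = _
      rw [Nat.add_sub_cancel, mul_assoc, Yv_mul_mono, Xv_mul_mono]
  have h3 : Mf Xv (mono a b) = mono (a+1) b := by
    rw [Mf]
    show Xv * mono a b = _
    exact Xv_mul_mono a b
  rw [W2, LinearMap.sub_apply, LinearMap.add_apply, LinearMap.smul_apply,
    LinearMap.smul_apply, h1, h2, h3, smul_smul, sub_smul, add_smul]

end S13
namespace S13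
open Finset MvPolynomial

/-! ### Support submodules -/

def suppSub (A : Set (Fin 2 →₀ ℕ)) : Submodule ℂ R2 where
  carrier := {g | ∀ s ∈ g.support, s ∈ A}
  add_mem' := by
    intro x y hx hy s hs
    rcases Finset.mem_union.1 (MvPolynomial.support_add hs) with h | h
    · exact hx s h
    · exact hy s h
  zero_mem' := by
    intro s hs
    simp at hs
  smul_mem' := by
    intro c x hx s hs
    exact hx s (Finsupp.support_smul hs)

lemma mono_mem_suppSub {A : Set (Fin 2 →₀ ℕ)} {a b : ℕ} (h : fs a b ∈ A) :
    mono a b ∈ suppSub A := by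
  intro s hs
  have := MvPolynomial.support_monomial_subset hs
  simp only [Finset.mem_singleton] at this
  rwa [this]

lemma Smod_le_suppSub (r p q : ℕ) :
    Smod r p q ≤ suppSub {s | s 0 + r * s 1 ≤ p ∧ s 1 ≤ q} := by
  rw [Smod, Submodule.span_le]
  rintro P ⟨i, j, hij, hj, rfl⟩
  rw [XY_eq_mono]
  exact mono_mem_suppSub (by simp [hij, hj])

lemma nonposY_le_suppSub (b : ℕ) :
    Submodule.span ℂ {P : R2 | ∃ c e : ℕ, e ≤ b ∧ P = Xv ^ c * Yv ^ e}
      ≤ suppSub {s | s 1 ≤ b} := by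
  rw [Submodule.span_le]
  rintro P ⟨c, e, he, rfl⟩
  rw [XY_eq_mono]
  exact mono_mem_suppSub (by simp [he])

lemma mono_mem_Smod {r p q i j : ℕ} (hij : i + r * j ≤ p) (hj : j ≤ q) :
    mono i j ∈ Smod r p q :=
  Submodule.subset_span ⟨i, j, hij, hj, (XY_eq_mono i j).symm⟩

/-! ### Operator extensionality on monomials -/

lemma opext {S T : Module.End ℂ R2} (h : ∀ a b : ℕ, S (mono a b) = T (mono a b)) :
    S = T := by
  refine LinearMap.ext fun g => ?_
  conv_lhs => rw [← MvPolynomial.support_sum_monomial_coeff g]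
  conv_rhs => rw [← MvPolynomial.support_sum_monomial_coeff g]
  rw [map_sum, map_sum]
  apply Finset.sum_congr rfl
  intro s _
  have hm : monomial s (coeff s g) = (coeff s g) • mono (s 0) (s 1) := by
    rw [mono, smul_monomial, smul_eq_mul, mul_one, ← eq_fs s]
  rw [hm, map_smul, map_smul, h]

/-! ### prodsLE lemmas -/

lemma prodsLE_monotone {S : Set (Module.End ℂ R2)} {n n' : ℕ} (h : n ≤ n') :
    prodsLE n S ⊆ prodsLE n' S := by
  rintro T ⟨l, hl, hm, rfl⟩
  exact ⟨l, le_trans hl h, hm, rfl⟩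

lemma one_mem_prodsLE (n : ℕ) (S : Set (Module.End ℂ R2)) : (1 : Module.End ℂ R2) ∈ prodsLE n S :=
  ⟨[], by simp, by simp, by simp⟩

lemma gen_mem_prodsLE {S : Set (Module.End ℂ R2)} {W : Module.End ℂ R2} (hW : W ∈ S) :
    W ∈ prodsLE 1 S :=
  ⟨[W], by simp, by simpa, by simp⟩

lemma span_prodsLE_mul {S : Set (Module.End ℂ R2)} {n₁ n₂ : ℕ} {A B : Module.End ℂ R2}
    (hA : A ∈ Submodule.span ℂ (prodsLE n₁ S)) (hB : B ∈ Submodule.span ℂ (prodsLE n₂ S)) :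
    A * B ∈ Submodule.span ℂ (prodsLE (n₁ + n₂) S) := by
  induction hA using Submodule.span_induction with
  | mem x hx =>
    induction hB using Submodule.span_induction with
    | mem y hy =>
      obtain ⟨l₁, hl₁, hm₁, rfl⟩ := hx
      obtain ⟨l₂, hl₂, hm₂, rfl⟩ := hy
      apply Submodule.subset_span
      refine ⟨l₁ ++ l₂, by simp; omega, ?_, by rw [List.prod_append]⟩
      intro a ha
      rcases List.mem_append.1 ha with h | h
      · exact hm₁ a h
      · exact hm₂ a h
    | zero => rw [mul_zero]; exact Submodule.zero_mem _
    | add y z _ _ hy hz => rw [mul_add]; exact Submodule.add_mem _ hy hz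
    | smul c y _ hy => rw [mul_smul_comm]; exact Submodule.smul_mem _ c hy
  | zero => rw [zero_mul]; exact Submodule.zero_mem _
  | add x y _ _ hx hy => rw [add_mul]; exact Submodule.add_mem _ hx hy
  | smul c x _ hx => rw [smul_mul_assoc]; exact Submodule.smul_mem _ c hx

/-! ### The realization predicate -/

abbrev F := ℤ → ℤ → ℂ

def IsReal (r p : ℕ) (n : ℕ) (u : ℤ) (t : ℕ) (σ : F) : Prop :=
  ∃ P ∈ Submodule.span ℂ (prodsLE n (Wset r p)),
    ∀ a b : ℕ, P (mono a b) = σ a b • monoZ ((a:ℤ) + u) ((b:ℤ) - t)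

variable {r p : ℕ}

lemma IsReal.congr {n : ℕ} {u : ℤ} {t : ℕ} {σ σ' : F} (h : IsReal r p n u t σ)
    (he : ∀ x y : ℤ, σ x y = σ' x y) : IsReal r p n u t σ' := by
  obtain ⟨P, hP, hact⟩ := h
  exact ⟨P, hP, fun a b => by rw [hact, he]⟩

lemma IsReal.mono_n {n n' : ℕ} {u : ℤ} {t : ℕ} {σ : F} (h : IsReal r p n u t σ) (hn : n ≤ n') :
    IsReal r p n' u t σ := by
  obtain ⟨P, hP, hact⟩ := h
  exact ⟨P, Submodule.span_mono (prodsLE_monotone hn) hP, hact⟩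

lemma IsReal.zero (n : ℕ) (u : ℤ) (t : ℕ) : IsReal r p n u t (fun _ _ => 0) :=
  ⟨0, Submodule.zero_mem _, fun a b => by simp⟩

lemma IsReal.add {n : ℕ} {u : ℤ} {t : ℕ} {σ τ : F} (hσ : IsReal r p n u t σ)
    (hτ : IsReal r p n u t τ) : IsReal r p n u t (fun x y => σ x y + τ x y) := by
  obtain ⟨P, hP, hPa⟩ := hσ
  obtain ⟨Q, hQ, hQa⟩ := hτ
  exact ⟨P + Q, Submodule.add_mem _ hP hQ, fun a b => by
    rw [LinearMap.add_apply, hPa, hQa, add_smul]⟩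

lemma IsReal.smul {n : ℕ} {u : ℤ} {t : ℕ} {σ : F} (c : ℂ) (hσ : IsReal r p n u t σ) :
    IsReal r p n u t (fun x y => c * σ x y) := by
  obtain ⟨P, hP, hPa⟩ := hσ
  exact ⟨c • P, Submodule.smul_mem _ c hP, fun a b => by
    rw [LinearMap.smul_apply, hPa, smul_smul]⟩

lemma IsReal.comp {n₁ n₂ : ℕ} {u₁ u₂ : ℤ} {t₁ t₂ : ℕ} {σ₁ σ₂ : F}
    (h₁ : IsReal r p n₁ u₁ t₁ σ₁) (h₂ : IsReal r p n₂ u₂ t₂ σ₂)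
    (hok : ∀ a b : ℕ, ((a:ℤ) + u₂ < 0 ∨ (b:ℤ) - t₂ < 0) → σ₂ a b = 0) :
    IsReal r p (n₁ + n₂) (u₁ + u₂) (t₁ + t₂)
      (fun x y => σ₂ x y * σ₁ (x + u₂) (y - t₂)) := by
  obtain ⟨P₁, hP₁, hP₁a⟩ := h₁
  obtain ⟨P₂, hP₂, hP₂a⟩ := h₂
  refine ⟨P₁ * P₂, span_prodsLE_mul hP₁ hP₂, fun a b => ?_⟩
  rw [Module.End.mul_apply, hP₂a, map_smul]
  by_cases hv : 0 ≤ (a:ℤ) + u₂ ∧ 0 ≤ (b:ℤ) - t₂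
  · obtain ⟨hva, hvb⟩ := hv
    have hZ : monoZ ((a:ℤ) + u₂) ((b:ℤ) - t₂) = mono ((a:ℤ) + u₂).toNat ((b:ℤ) - t₂).toNat := by
      rw [monoZ, if_pos ⟨hva, hvb⟩]
    rw [hZ, hP₁a, smul_smul]
    rw [Int.toNat_of_nonneg hva, Int.toNat_of_nonneg hvb]
    rw [show (a:ℤ) + u₂ + u₁ = (a:ℤ) + (u₁ + u₂) by ring,
      show (b:ℤ) - t₂ - t₁ = (b:ℤ) - (t₁ + t₂ : ℕ) by push_cast; ring]
  · have h0 : σ₂ (a:ℤ) (b:ℤ) = 0 := hok a b (by omega)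
    have hZ : monoZ ((a:ℤ) + u₂) ((b:ℤ) - t₂) = (0:R2) := by rw [monoZ, if_neg hv]
    rw [hZ, map_zero, smul_zero]
    simp [h0]

/-! ### Generators are realizable -/

lemma W1_mem_Wset : W1 ∈ Wset r p := Or.inl (by simp)
lemma W2_mem_Wset : W2 r p ∈ Wset r p := Or.inl (by simp)
lemma W3_mem_Wset : W3 p ∈ Wset r p := Or.inl (by simp)
lemma W4_mem_Wset : W4 ∈ Wset r p := Or.inl (by simp)
lemma W5i_mem_Wset {i : ℕ} (hi : i ≤ r) : W5i i ∈ Wset r p := Or.inr ⟨i, hi, rfl⟩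

lemma isReal_const (γ : ℂ) : IsReal r p 0 0 0 (fun _ _ => γ) := by
  refine ⟨γ • 1, Submodule.smul_mem _ γ (Submodule.subset_span (one_mem_prodsLE 0 _)), fun a b => ?_⟩
  rw [LinearMap.smul_apply, Module.End.one_apply]
  rw [show (a:ℤ) + 0 = ((a:ℕ):ℤ) by ring, show (b:ℤ) - (0:ℕ) = ((b:ℕ):ℤ) by push_cast; ring]
  rw [monoZ_natCast]

lemma isReal_W1 : IsReal r p 1 (-1) 0 (fun x _ => (x:ℂ)) := by
  refine ⟨W1, Submodule.subset_span (gen_mem_prodsLE W1_mem_Wset), fun a b => ?_⟩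
  rw [W1_mono, show (a:ℤ) - 1 = (a:ℤ) + -1 by ring]
  norm_num

lemma isReal_W2 : IsReal r p 1 1 0 (fun x y => (x:ℂ) + (r:ℂ)*(y:ℂ) - (p:ℂ)) := by
  refine ⟨W2 r p, Submodule.subset_span (gen_mem_prodsLE W2_mem_Wset), fun a b => ?_⟩
  rw [W2_mono]
  rw [show (a:ℤ) + 1 = ((a+1:ℕ):ℤ) by push_cast; ring,
    show (b:ℤ) - (0:ℕ) = ((b:ℕ):ℤ) by push_cast; ring, monoZ_natCast]
  push_cast
  ring_nf

lemma isReal_xsub (γ : ℂ) : IsReal r p 1 0 0 (fun x _ => (x:ℂ) - γ) := by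
  have h1 : IsReal r p 1 0 0 (fun x _ => (x:ℂ) - (p:ℂ)/2) := by
    refine ⟨W3 p, Submodule.subset_span (gen_mem_prodsLE W3_mem_Wset), fun a b => ?_⟩
    rw [W3_mono]
    rw [show (a:ℤ) + 0 = ((a:ℕ):ℤ) by ring, show (b:ℤ) - (0:ℕ) = ((b:ℕ):ℤ) by push_cast; ring,
      monoZ_natCast]
    push_cast
    ring_nf
  have h2 := (isReal_const (r := r) (p := p) ((p:ℂ)/2 - γ)).mono_n (le_of_lt Nat.zero_lt_one)
  exact (h1.add h2).congr (fun x y => by push_cast; ring)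

lemma isReal_ysub (γ : ℂ) : IsReal r p 1 0 0 (fun _ y => (y:ℂ) - γ) := by
  have h1 : IsReal r p 1 0 0 (fun _ y => (y:ℂ)) := by
    refine ⟨W4, Submodule.subset_span (gen_mem_prodsLE W4_mem_Wset), fun a b => ?_⟩
    rw [W4_mono]
    rw [show (a:ℤ) + 0 = ((a:ℕ):ℤ) by ring, show (b:ℤ) - (0:ℕ) = ((b:ℕ):ℤ) by push_cast; ring,
      monoZ_natCast]
    norm_num
  have h2 := (isReal_const (r := r) (p := p) (-γ)).mono_n (le_of_lt Nat.zero_lt_one)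
  exact (h1.add h2).congr (fun x y => by push_cast; ring)

lemma isReal_W5 {i : ℕ} (hi : i ≤ r) : IsReal r p 1 (i:ℤ) 1 (fun _ y => (y:ℂ)) := by
  refine ⟨W5i i, Submodule.subset_span (gen_mem_prodsLE (W5i_mem_Wset hi)), fun a b => ?_⟩
  rw [W5i_mono]
  norm_num

end S13
namespace S13
open Finset MvPolynomial

def ffsym (c e : ℕ) : F := fun x y => ffc x c * ffc y e

def phis (r p : ℕ) (c : ℕ) : F :=
  fun x y => ∏ j ∈ Finset.range c, ((x:ℂ) + (r:ℂ)*(y:ℂ) - (p:ℂ) + (j:ℂ))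

variable {r p : ℕ}

lemma isReal_Ychain (t I : ℕ) (hI : I ≤ r * t) :
    IsReal r p t (I:ℤ) t (fun _ y => ffc y t) := by
  induction t generalizing I with
  | zero =>
    have hI0 : I = 0 := by omega
    subst hI0
    exact (isReal_const 1).congr (fun x y => by rw [ffc_zero])
  | succ t ih =>
    set i := min r I with hidef
    have hir : i ≤ r := min_le_left _ _
    have hiI : i ≤ I := min_le_right _ _
    have hrt : r * (t + 1) = r * t + r := by ring
    have hI' : I - i ≤ r * t := by omega
    have hcomp := (ih (I - i) hI').comp (isReal_W5 (p := p) hir)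
      (fun a b h => by
        rcases h with h | h
        · exfalso; omega
        · have : b = 0 := by omega
          simp [this])
    rw [show ((I - i : ℕ):ℤ) + (i:ℤ) = (I:ℤ) by omega, show t + 1 = t.succ by rfl] at hcomp
    exact hcomp.congr (fun x y => by
      show (y:ℂ) * ffc (y - 1) t = ffc y (t+1)
      rw [ffc_succ'])

lemma isReal_prodX (n : ℕ) (g : ℕ → ℂ) :
    IsReal r p n 0 0 (fun x _ => ∏ s ∈ Finset.range n, ((x:ℂ) - g s)) := by
  induction n with
  | zero => exact (isReal_const 1).congr (fun x y => by simp)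
  | succ n ih =>
    have hcomp := (isReal_xsub (r := r) (p := p) (g n)).comp ih
      (fun a b h => by exfalso; rcases h with h | h <;> omega)
    rw [show (1 : ℕ) + n = n + 1 by omega] at hcomp
    exact hcomp.congr (fun x y => by
      show (∏ s ∈ Finset.range n, ((x:ℂ) - g s)) * ((((x + 0 : ℤ)):ℂ) - g n) = _
      rw [Finset.prod_range_succ]
      norm_num)

lemma isReal_prodY (n : ℕ) (g : ℕ → ℂ) :
    IsReal r p n 0 0 (fun _ y => ∏ s ∈ Finset.range n, ((y:ℂ) - g s)) := by
  induction n with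
  | zero => exact (isReal_const 1).congr (fun x y => by simp)
  | succ n ih =>
    have hcomp := (isReal_ysub (r := r) (p := p) (g n)).comp ih
      (fun a b h => by exfalso; rcases h with h | h <;> omega)
    rw [show (1 : ℕ) + n = n + 1 by omega] at hcomp
    exact hcomp.congr (fun x y => by
      show (∏ s ∈ Finset.range n, ((y:ℂ) - g s)) * ((((y - (0:ℕ) : ℤ)):ℂ) - g n) = _
      rw [Finset.prod_range_succ]
      norm_num)

lemma isReal_Achain (n : ℕ) : IsReal r p n (-(n:ℤ)) 0 (fun x _ => ffc x n) := by
  induction n with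
  | zero => exact (isReal_const 1).congr (fun x y => by rw [ffc_zero])
  | succ n ih =>
    have hcomp := ih.comp (isReal_W1 (r := r) (p := p))
      (fun a b h => by
        rcases h with h | h
        · have : a = 0 := by omega
          simp [this]
        · exfalso; omega)
    rw [show -(n:ℤ) + -1 = -((n+1 : ℕ):ℤ) by push_cast; ring,
      show n + 1 = n.succ by rfl] at hcomp
    exact hcomp.congr (fun x y => by
      show (x:ℂ) * ffc (x + -1) n = ffc x (n+1)
      rw [ffc_succ', show x + -1 = x - 1 by ring])

lemma isReal_Gchain (m : ℕ) : IsReal r p m (m:ℤ) 0 (phis r p m) := by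
  induction m with
  | zero => exact (isReal_const 1).congr (fun x y => by simp [phis])
  | succ m ih =>
    have hcomp := ih.comp (isReal_W2 (r := r) (p := p))
      (fun a b h => by exfalso; rcases h with h | h <;> omega)
    rw [show (m:ℤ) + 1 = ((m+1 : ℕ):ℤ) by push_cast; ring,
      show m + 1 = m.succ by rfl] at hcomp
    exact hcomp.congr (fun x y => by
      show ((x:ℂ) + (r:ℂ)*(y:ℂ) - (p:ℂ)) * phis r p m (x + 1) (y - 0) = phis r p (m+1) x y
      rw [phis, phis, Finset.prod_range_succ']
      have h1 : ∀ j ∈ Finset.range m,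
          (((x + 1 : ℤ)):ℂ) + (r:ℂ)*(((y - 0 : ℤ)):ℂ) - (p:ℂ) + (j:ℂ)
            = (x:ℂ) + (r:ℂ)*(y:ℂ) - (p:ℂ) + ((j+1 : ℕ):ℂ) := by
        intro j _
        push_cast
        ring
      rw [Finset.prod_congr rfl h1]
      push_cast
      ring)

/-- The elementary realization: the symbol `(x)_c (y)_e` with shift `(u, -t)`. -/
lemma isReal_ffsym (c e t : ℕ) (u : ℤ) (hte : t ≤ e) (hu : u ≤ (r:ℤ) * t)
    (hu' : -(c:ℤ) ≤ u) : IsReal r p (c + e) u t (ffsym c e) := by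
  rcases le_or_gt 0 u with hs | hs
  · -- u ≥ 0 : the y-moves carry total x-shift u; no Dx-lowering needed
    set I := u.toNat with hIdef
    have hIu : (I:ℤ) = u := Int.toNat_of_nonneg hs
    have hI : I ≤ r * t := by
      have : (I:ℤ) ≤ (r:ℤ) * t := by rw [hIu]; exact hu
      exact_mod_cast this
    have c12 := (isReal_prodY (r := r) (p := p) (e - t) (fun s => (s:ℂ))).comp
      (isReal_Ychain t I hI)
      (fun a b h => by
        rcases h with h | h
        · exfalso; omega
        · exact ffc_nat_lt (by omega))
    rw [show (0 : ℤ) + (I:ℤ) = (I:ℤ) by ring, show (e - t) + t = e by omega,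
      show (0:ℕ) + t = t by omega] at c12
    have c123 := (isReal_prodX (r := r) (p := p) c (fun s => (I:ℂ) + (s:ℂ))).comp c12
      (fun a b h => by
        rcases h with h | h
        · exfalso; omega
        · show ffc (b:ℤ) t * _ = 0
          rw [ffc_nat_lt (show b < t by omega), zero_mul])
    rw [show (0 : ℤ) + (I:ℤ) = u by rw [hIu]; ring,
      show (0 : ℕ) + t = t by omega] at c123
    refine c123.congr (fun x y => ?_)
    show (ffc y t * ∏ s ∈ Finset.range (e - t), ((((y - (t:ℕ) : ℤ)):ℂ) - (s:ℂ)))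
        * (∏ s ∈ Finset.range c, ((((x + (I:ℕ) : ℤ)):ℂ) - ((I:ℂ) + (s:ℂ)))) = ffsym c e x y
    have e1 : ∀ s ∈ Finset.range (e - t),
        (((y - (t:ℕ) : ℤ)):ℂ) - (s:ℂ) = (y:ℂ) - (t:ℂ) - (s:ℂ) := by
      intro s _; push_cast; ring
    have e2 : ∀ s ∈ Finset.range c,
        (((x + (I:ℕ) : ℤ)):ℂ) - ((I:ℂ) + (s:ℂ)) = (x:ℂ) - (s:ℂ) := by
      intro s _; push_cast; ring
    rw [Finset.prod_congr rfl e1, Finset.prod_congr rfl e2, ← ffc_split,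
      show t + (e - t) = e by omega]
    show ffc y e * ffc x c = ffc x c * ffc y e
    ring
  · -- u < 0 : Dx-lowering by n' = -u
    set n' := (-u).toNat with hndef
    have hnu : (n':ℤ) = -u := Int.toNat_of_nonneg (by omega)
    have hnc : n' ≤ c := by
      have : (n':ℤ) ≤ (c:ℤ) := by omega
      exact_mod_cast this
    have c12 := (isReal_prodY (r := r) (p := p) (e - t) (fun s => (s:ℂ))).comp
      (isReal_Ychain t 0 (by omega))
      (fun a b h => by
        rcases h with h | h
        · exfalso; omega
        · exact ffc_nat_lt (by omega))
    rw [show (0 : ℤ) + ((0:ℕ):ℤ) = (0:ℤ) by norm_num, show (e - t) + t = e by omega,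
      show (0:ℕ) + t = t by omega] at c12
    have c123 := (isReal_Achain (r := r) (p := p) n').comp c12
      (fun a b h => by
        rcases h with h | h
        · exfalso; omega
        · show ffc (b:ℤ) t * _ = 0
          rw [ffc_nat_lt (show b < t by omega), zero_mul])
    rw [show n' + e = n' + e from rfl] at c123
    rw [show -(n':ℤ) + 0 = -(n':ℤ) by ring] at c123
    rw [show (0:ℕ) + t = t by omega] at c123
    have c1234 := (isReal_prodX (r := r) (p := p) (c - n') (fun s => (s:ℂ))).comp c123
      (fun a b h => by
        rcases h with h | h
        · show (ffc (b:ℤ) t * _) * ffc ((a:ℤ) + 0) n' = 0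
          have : a < n' := by omega
          rw [show (a:ℤ) + 0 = ((a:ℕ):ℤ) by ring, ffc_nat_lt this, mul_zero]
        · show (ffc (b:ℤ) t * _) * _ = 0
          rw [ffc_nat_lt (show b < t by omega), zero_mul, zero_mul])
    rw [show c - n' + (n' + e) = c + e by omega] at c1234
    rw [show (0:ℤ) + -(n':ℤ) = u by omega] at c1234
    rw [show (0:ℕ) + t = t by omega] at c1234
    refine c1234.congr (fun x y => ?_)
    show (ffc y t * ∏ s ∈ Finset.range (e - t), ((((y - (t:ℕ) : ℤ)):ℂ) - (s:ℂ)))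
        * ffc (x + 0) n' * (∏ s ∈ Finset.range (c - n'), ((((x + -(n':ℤ) : ℤ)):ℂ) - (s:ℂ)))
        = ffsym c e x y
    have e1 : ∀ s ∈ Finset.range (e - t),
        (((y - (t:ℕ) : ℤ)):ℂ) - (s:ℂ) = (y:ℂ) - (t:ℂ) - (s:ℂ) := by
      intro s _; push_cast; ring
    have e3 : ∀ s ∈ Finset.range (c - n'),
        (((x + -(n':ℤ) : ℤ)):ℂ) - (s:ℂ) = (x:ℂ) - (n':ℂ) - (s:ℂ) := by
      intro s _; push_cast; ring
    rw [Finset.prod_congr rfl e1, Finset.prod_congr rfl e3, ← ffc_split,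
      show t + (e - t) = e by omega, show x + 0 = x by ring]
    have e4 : ffc x n' * ∏ s ∈ Finset.range (c - n'), ((x:ℂ) - (n':ℂ) - (s:ℂ)) = ffc x c := by
      rw [← ffc_split, show n' + (c - n') = c by omega]
    show ffc y e * ffc x n' * ∏ s ∈ Finset.range (c - n'), ((x:ℂ) - (n':ℂ) - (s:ℂ))
        = ffsym c e x y
    rw [mul_assoc, e4, ffsym]
    ring

end S13
namespace S13
open Finset MvPolynomial

/-! ### Symbol spans -/

def bsym (r p : ℕ) (c e : ℕ) : F := fun x y => phis r p c x y * ffc y e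

def FFset (t n : ℕ) : Set F := {σ | ∃ c e : ℕ, t ≤ e ∧ c + e ≤ n ∧ σ = ffsym c e}

def Bset (r p : ℕ) (t n : ℕ) : Set F := {σ | ∃ c e : ℕ, t ≤ e ∧ c + e ≤ n ∧ σ = bsym r p c e}

variable {r p : ℕ}

lemma FFset_mono {t n n' : ℕ} (h : n ≤ n') : FFset t n ⊆ FFset t n' := by
  rintro σ ⟨c, e, h1, h2, rfl⟩
  exact ⟨c, e, h1, le_trans h2 h, rfl⟩

lemma Bset_mono {t n n' : ℕ} (h : n ≤ n') : Bset r p t n ⊆ Bset r p t n' := by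
  rintro σ ⟨c, e, h1, h2, rfl⟩
  exact ⟨c, e, h1, le_trans h2 h, rfl⟩

/-- multiplication by `x + r y - γ` preserves the FF span. -/
lemma spanFF_mulW {t n : ℕ} {σ : F} (γ : ℂ) (hσ : σ ∈ Submodule.span ℂ (FFset t n)) :
    (fun x y => ((x:ℂ) + (r:ℂ)*(y:ℂ) - γ) * σ x y : F) ∈ Submodule.span ℂ (FFset t (n+1)) := by
  induction hσ using Submodule.span_induction with
  | mem τ hτ =>
    obtain ⟨c, e, h1, h2, rfl⟩ := hτ
    have key : (fun x y => ((x:ℂ) + (r:ℂ)*(y:ℂ) - γ) * ffsym c e x y : F)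
        = (ffsym (c+1) e + (r:ℂ) • ffsym c (e+1) + ((c:ℂ) + (r:ℂ)*(e:ℂ) - γ) • ffsym c e : F) := by
      funext x y
      show _ = ffsym (c+1) e x y + (r:ℂ) * ffsym c (e+1) x y + ((c:ℂ) + (r:ℂ)*(e:ℂ) - γ) * ffsym c e x y
      simp only [ffsym]
      rw [ffc_succ x c, ffc_succ y e]
      ring
    rw [key]
    apply Submodule.add_mem
    apply Submodule.add_mem
    · exact Submodule.subset_span ⟨c+1, e, h1, by omega, rfl⟩
    · exact Submodule.smul_mem _ _ (Submodule.subset_span ⟨c, e+1, by omega, by omega, rfl⟩)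
    · exact Submodule.smul_mem _ _ (Submodule.subset_span ⟨c, e, h1, by omega, rfl⟩)
  | zero =>
    have : (fun x y => ((x:ℂ) + (r:ℂ)*(y:ℂ) - γ) * (0:F) x y : F) = (0:F) := by
      funext x y; simp
    rw [this]; exact Submodule.zero_mem _
  | add τ₁ τ₂ _ _ h1 h2 =>
    have : (fun x y => ((x:ℂ) + (r:ℂ)*(y:ℂ) - γ) * (τ₁ + τ₂) x y : F)
        = ((fun x y => ((x:ℂ) + (r:ℂ)*(y:ℂ) - γ) * τ₁ x y : F)
          + (fun x y => ((x:ℂ) + (r:ℂ)*(y:ℂ) - γ) * τ₂ x y : F)) := by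
      funext x y
      simp only [Pi.add_apply]
      ring
    rw [this]; exact Submodule.add_mem _ h1 h2
  | smul a τ _ h1 =>
    have : (fun x y => ((x:ℂ) + (r:ℂ)*(y:ℂ) - γ) * (a • τ) x y : F)
        = a • (fun x y => ((x:ℂ) + (r:ℂ)*(y:ℂ) - γ) * τ x y : F) := by
      funext x y
      simp only [Pi.smul_apply, smul_eq_mul]
      ring
    rw [this]; exact Submodule.smul_mem _ _ h1

/-- multiplication by `x - γ` preserves the B span. -/
lemma spanB_mulX {t n : ℕ} {σ : F} (γ : ℂ) (hσ : σ ∈ Submodule.span ℂ (Bset r p t n)) :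
    (fun x y => ((x:ℂ) - γ) * σ x y : F) ∈ Submodule.span ℂ (Bset r p t (n+1)) := by
  induction hσ using Submodule.span_induction with
  | mem τ hτ =>
    obtain ⟨c, e, h1, h2, rfl⟩ := hτ
    have key : (fun x y => ((x:ℂ) - γ) * bsym r p c e x y : F)
        = (bsym r p (c+1) e + (-(r:ℂ)) • bsym r p c (e+1)
            + ((p:ℂ) - (c:ℂ) - (r:ℂ)*(e:ℂ) - γ) • bsym r p c e : F) := by
      funext x y
      show _ = bsym r p (c+1) e x y + (-(r:ℂ)) * bsym r p c (e+1) x y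
          + ((p:ℂ) - (c:ℂ) - (r:ℂ)*(e:ℂ) - γ) * bsym r p c e x y
      simp only [bsym, phis]
      rw [Finset.prod_range_succ, ffc_succ y e]
      ring
    rw [key]
    apply Submodule.add_mem
    apply Submodule.add_mem
    · exact Submodule.subset_span ⟨c+1, e, h1, by omega, rfl⟩
    · exact Submodule.smul_mem _ _ (Submodule.subset_span ⟨c, e+1, by omega, by omega, rfl⟩)
    · exact Submodule.smul_mem _ _ (Submodule.subset_span ⟨c, e, h1, by omega, rfl⟩)
  | zero =>
    have : (fun x y => ((x:ℂ) - γ) * (0:F) x y : F) = (0:F) := by funext x y; simp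
    rw [this]; exact Submodule.zero_mem _
  | add τ₁ τ₂ _ _ h1 h2 =>
    have : (fun x y => ((x:ℂ) - γ) * (τ₁ + τ₂) x y : F)
        = ((fun x y => ((x:ℂ) - γ) * τ₁ x y : F) + (fun x y => ((x:ℂ) - γ) * τ₂ x y : F)) := by
      funext x y
      simp only [Pi.add_apply]
      ring
    rw [this]; exact Submodule.add_mem _ h1 h2
  | smul a τ _ h1 =>
    have : (fun x y => ((x:ℂ) - γ) * (a • τ) x y : F)
        = a • (fun x y => ((x:ℂ) - γ) * τ x y : F) := by
      funext x y
      simp only [Pi.smul_apply, smul_eq_mul]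
      ring
    rw [this]; exact Submodule.smul_mem _ _ h1

lemma ffsym_mem_spanB {t c e : ℕ} (hte : t ≤ e) :
    ffsym c e ∈ Submodule.span ℂ (Bset r p t (c + e)) := by
  induction c with
  | zero =>
    apply Submodule.subset_span
    refine ⟨0, e, hte, by omega, ?_⟩
    funext x y
    simp [ffsym, bsym, phis, ffc_zero]
  | succ c ih =>
    have key : ffsym (c+1) e = (fun x y => ((x:ℂ) - (c:ℂ)) * ffsym c e x y : F) := by
      funext x y
      show ffsym (c+1) e x y = _
      simp only [ffsym]
      rw [ffc_succ x c]
      ring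
    rw [key]
    have := spanB_mulX (r := r) (p := p) (t := t) (c:ℂ) ih
    rwa [show c + e + 1 = c + 1 + e by omega] at this

lemma rho_mem_spanFF {t c e : ℕ} (hte : t ≤ e) :
    (fun x y => phis r p c x y * ffc y e : F) ∈ Submodule.span ℂ (FFset t (c + e)) := by
  induction c with
  | zero =>
    apply Submodule.subset_span
    refine ⟨0, e, hte, by omega, ?_⟩
    funext x y
    simp [ffsym, phis, ffc_zero]
  | succ c ih =>
    have key : (fun x y => phis r p (c+1) x y * ffc y e : F)
        = (fun x y => ((x:ℂ) + (r:ℂ)*(y:ℂ) - ((p:ℂ) - (c:ℂ))) * (phis r p c x y * ffc y e) : F) := by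
      funext x y
      simp only [phis]
      rw [Finset.prod_range_succ]
      ring
    rw [key]
    have := spanFF_mulW (r := r) (t := t) ((p:ℂ) - (c:ℂ)) ih
    rwa [show c + e + 1 = c + 1 + e by omega] at this

/-! ### Finite representation in the B basis -/

def Jset (t n : ℕ) : Finset (ℕ × ℕ) :=
  (Finset.range (n+1) ×ˢ Finset.Icc t n).filter (fun ce => ce.1 + ce.2 ≤ n)

lemma rep_of_mem_spanB {t n : ℕ} {σ : F} (hσ : σ ∈ Submodule.span ℂ (Bset r p t n)) :
    ∃ h : ℕ × ℕ → ℂ, σ = ∑ ce ∈ Jset t n, h ce • bsym r p ce.1 ce.2 := by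
  induction hσ using Submodule.span_induction with
  | mem τ hτ =>
    obtain ⟨c, e, h1, h2, rfl⟩ := hτ
    refine ⟨fun ce => if ce = (c, e) then 1 else 0, ?_⟩
    have hmem : (c, e) ∈ Jset t n := by
      simp only [Jset, Finset.mem_filter, Finset.mem_product, Finset.mem_range, Finset.mem_Icc]
      omega
    rw [Finset.sum_eq_single_of_mem (c, e) hmem]
    · simp
    · intro ce _ hne
      simp [hne]
  | zero => exact ⟨0, by simp⟩
  | add τ₁ τ₂ _ _ h1 h2 =>
    obtain ⟨g1, hg1⟩ := h1
    obtain ⟨g2, hg2⟩ := h2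
    refine ⟨g1 + g2, ?_⟩
    rw [hg1, hg2, ← Finset.sum_add_distrib]
    apply Finset.sum_congr rfl
    intro ce _
    show _ = (g1 ce + g2 ce) • _
    rw [add_smul]
  | smul a τ _ h1 =>
    obtain ⟨g, hg⟩ := h1
    refine ⟨fun ce => a * g ce, ?_⟩
    rw [hg, Finset.smul_sum]
    apply Finset.sum_congr rfl
    intro ce _
    rw [smul_smul]

/-! ### Newton vanishing -/

lemma newton {t B : ℕ} (s : ℕ → ℂ) (E : Finset ℕ) (hE : ∀ e ∈ E, t ≤ e ∧ e ≤ B)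
    (hv : ∀ b : ℕ, t ≤ b → b ≤ B → ∑ e ∈ E, s e * ffc (b:ℤ) e = 0) :
    ∀ e ∈ E, s e = 0 := by
  have aux : ∀ b : ℕ, ∀ e ∈ E, t ≤ b → b ≤ B → e ≤ b → s e = 0 := by
    intro b
    induction b using Nat.strong_induction_on with
    | _ b ih =>
      intro e he htb hbB heb
      rcases lt_or_eq_of_le heb with hlt | heq
      · exact ih e hlt e he (hE e he).1 (hE e he).2 le_rfl
      · subst heq
        have hsum := hv e htb hbB
        rw [Finset.sum_eq_single_of_mem e he] at hsum
        · have hne : ffc (e:ℤ) e ≠ 0 := ffc_nat_ne le_rfl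
          exact (mul_eq_zero.1 hsum).resolve_right hne
        · intro e' he' hne
          rcases lt_or_gt_of_ne hne with h | h
          · rw [ih e' h e' he' (hE e' he').1 (hE e' he').2 le_rfl, zero_mul]
          · rw [ffc_nat_lt h, mul_zero]
  intro e he
  exact aux e e he (hE e he).1 (hE e he).2 le_rfl

/-! ### The key vanishing lemma for the `m > 0` part -/

lemma vanish {q t m k : ℕ} (hr : 0 < r) (h : ℕ × ℕ → ℂ) (S : Finset (ℕ × ℕ))
    (hS : ∀ ce ∈ S, ce.1 < m ∧ ce.1 + r * ce.2 ≤ p ∧ ce.2 ≤ q ∧ t ≤ ce.2 ∧ ce.1 + ce.2 ≤ k)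
    (hv : ∀ j b : ℕ, j < m → t ≤ b → b ≤ q → j + r * b ≤ p →
      ∑ ce ∈ S, h ce * (phis r p ce.1 ((p:ℤ) - (j:ℤ) - (r:ℤ)*(b:ℤ)) (b:ℤ) * ffc (b:ℤ) ce.2) = 0) :
    ∀ ce ∈ S, h ce = 0 := by
  have main : ∀ c₀ : ℕ, ∀ ce ∈ S, ce.1 = c₀ → h ce = 0 := by
    intro c₀
    induction c₀ using Nat.strong_induction_on with
    | _ c₀ ih =>
      intro ce₀ hce₀ hc₀
      have hspec := hS ce₀ hce₀
      have hc₀m : c₀ < m := by omega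
      set B := min q ((p - c₀) / r) with hB
      -- the line sum
      have hline : ∀ b : ℕ, t ≤ b → b ≤ B →
          ∑ e ∈ (S.filter (fun ce => ce.1 = c₀)).image Prod.snd,
            h (c₀, e) * ffc (b:ℤ) e = 0 := by
        intro b htb hbB
        have hbq : b ≤ q := le_trans hbB (min_le_left _ _)
        have hbr : c₀ + r * b ≤ p := by
          have h1 : b ≤ (p - c₀) / r := le_trans hbB (min_le_right _ _)
          have hc₀p : c₀ ≤ p := le_trans (Nat.le_add_right _ _) (hc₀ ▸ hspec.2.1)
          have h2 : r * b ≤ p - c₀ := by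
            rw [mul_comm]
            exact (Nat.le_div_iff_mul_le hr).1 h1
          have h3 := Nat.add_le_add_left h2 c₀
          rwa [Nat.add_sub_cancel' hc₀p] at h3
        have hsum := hv c₀ b hc₀m htb hbq hbr
        -- the value of phis c₀ on the line
        have hval : ∀ c' : ℕ, phis r p c' ((p:ℤ) - (c₀:ℤ) - (r:ℤ)*(b:ℤ)) (b:ℤ)
            = ∏ i ∈ Finset.range c', ((i:ℂ) - (c₀:ℂ)) := by
          intro c'
          apply Finset.prod_congr rfl
          intro i _
          push_cast
          ring
        have hvne : (∏ i ∈ Finset.range c₀, ((i:ℂ) - (c₀:ℂ))) ≠ 0 := by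
          apply Finset.prod_ne_zero_iff.2
          intro i hi
          have : i < c₀ := Finset.mem_range.1 hi
          intro hcon
          have : (i:ℂ) = (c₀:ℂ) := by linear_combination hcon
          exact absurd (Nat.cast_injective this) (by omega)
        -- split the sum
        rw [← Finset.sum_filter_add_sum_filter_not S (fun ce => ce.1 = c₀)] at hsum
        have hz2 : ∑ ce ∈ S.filter (fun ce => ¬ ce.1 = c₀),
            h ce * (phis r p ce.1 ((p:ℤ) - (c₀:ℤ) - (r:ℤ)*(b:ℤ)) (b:ℤ) * ffc (b:ℤ) ce.2) = 0 := by
          apply Finset.sum_eq_zero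
          intro ce hce
          rw [Finset.mem_filter] at hce
          rcases lt_or_gt_of_ne (hce.2 : ce.1 ≠ c₀) with hlt | hgt
          · rw [ih ce.1 hlt ce hce.1 rfl, zero_mul]
          · have hzero : phis r p ce.1 ((p:ℤ) - (c₀:ℤ) - (r:ℤ)*(b:ℤ)) (b:ℤ) = 0 := by
              apply Finset.prod_eq_zero (Finset.mem_range.2 hgt)
              push_cast
              ring
            rw [hzero, zero_mul, mul_zero]
        rw [hz2, add_zero] at hsum
        -- rewrite filtered sum via image
        have himg : ∑ ce ∈ S.filter (fun ce => ce.1 = c₀),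
            h ce * (phis r p ce.1 ((p:ℤ) - (c₀:ℤ) - (r:ℤ)*(b:ℤ)) (b:ℤ) * ffc (b:ℤ) ce.2)
            = (∏ i ∈ Finset.range c₀, ((i:ℂ) - (c₀:ℂ)))
              * ∑ e ∈ (S.filter (fun ce => ce.1 = c₀)).image Prod.snd,
                  h (c₀, e) * ffc (b:ℤ) e := by
          rw [Finset.mul_sum, Finset.sum_image]
          · apply Finset.sum_congr rfl
            intro ce hce
            rw [Finset.mem_filter] at hce
            have : ce = (c₀, ce.2) := by
              ext
              · exact hce.2
              · rfl
            rw [hval ce.1, hce.2]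
            conv_lhs => rw [this]
            ring
          · intro ce hce ce' hce' hee
            rw [Finset.mem_coe, Finset.mem_filter] at hce hce'
            ext
            · rw [hce.2, hce'.2]
            · exact hee
        rw [himg] at hsum
        exact (mul_eq_zero.1 hsum).resolve_left hvne
      -- apply newton
      have hnewt := newton (t := t) (B := B) (fun e => h (c₀, e))
        ((S.filter (fun ce => ce.1 = c₀)).image Prod.snd)
        (by
          intro e he
          obtain ⟨ce, hce, rfl⟩ := Finset.mem_image.1 he
          rw [Finset.mem_filter] at hce
          have hspec' := hS ce hce.1
          constructor
          · exact hspec'.2.2.2.1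
          · apply le_min
            · exact hspec'.2.2.1
            · have h3 : c₀ + r * ce.2 ≤ p := by rw [← hce.2]; exact hspec'.2.1
              rw [Nat.le_div_iff_mul_le hr, mul_comm]
              exact Nat.le_sub_of_add_le (by rw [add_comm]; exact h3))
        hline
      have hmem : ce₀.2 ∈ (S.filter (fun ce => ce.1 = c₀)).image Prod.snd :=
        Finset.mem_image.2 ⟨ce₀, Finset.mem_filter.2 ⟨hce₀, hc₀⟩, rfl⟩
      have hpair : ce₀ = (c₀, ce₀.2) := by rw [← hc₀]
      rw [hpair]
      simpa using hnewt ce₀.2 hmem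
  intro ce hce
  exact main ce.1 ce hce rfl

end S13
namespace S13
open Finset MvPolynomial

variable {r p : ℕ}

lemma isReal_sum {n : ℕ} {u : ℤ} {t : ℕ} {ι : Type*} (s : Finset ι) (g : ι → F)
    (h : ∀ i ∈ s, IsReal r p n u t (g i)) :
    IsReal r p n u t (fun x y => ∑ i ∈ s, g i x y) := by
  classical
  induction s using Finset.induction_on with
  | empty => exact (IsReal.zero n u t).congr (fun x y => by simp)
  | insert a s' hni ih =>
    have h1 := h a (Finset.mem_insert_self a s')
    have h2 := ih (fun i hi => h i (Finset.mem_insert_of_mem hi))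
    exact (h1.add h2).congr (fun x y => by rw [Finset.sum_insert hni])

lemma isReal_of_spanFF {n t : ℕ} {σ : F} (hσ : σ ∈ Submodule.span ℂ (FFset t n)) :
    IsReal r p n ((r * t : ℕ) : ℤ) t σ := by
  induction hσ using Submodule.span_induction with
  | mem τ hτ =>
    obtain ⟨c, e, h1, h2, rfl⟩ := hτ
    exact (isReal_ffsym c e t ((r*t : ℕ):ℤ) h1 (by push_cast; exact le_rfl)
      (by omega)).mono_n h2
  | zero => exact (IsReal.zero n _ t).congr (fun x y => rfl)
  | add τ₁ τ₂ _ _ h1 h2 => exact (h1.add h2).congr (fun x y => rfl)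
  | smul a τ _ h1 => exact (h1.smul a).congr (fun x y => rfl)

lemma phis_add (m n : ℕ) (x y : ℤ) :
    phis r p (m + n) x y = phis r p m x y * phis r p n (x + (m:ℕ)) y := by
  rw [phis, phis, phis, Finset.prod_range_add]
  congr 1
  refine Finset.prod_congr rfl fun i _ => ?_
  push_cast
  ring

lemma isReal_bsym {t c e m : ℕ} (hte : t ≤ e) (hmc : m ≤ c) :
    IsReal r p (c + e) ((m:ℤ) + ((r * t : ℕ) : ℤ)) t (bsym r p c e) := by
  have h1 : IsReal r p ((c - m) + e) (((r*t:ℕ)):ℤ) t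
      (fun x y => phis r p (c-m) x y * ffc y e : F) := isReal_of_spanFF (rho_mem_spanFF hte)
  have h2 : IsReal r p m (m:ℤ) 0 (phis r p m) := isReal_Gchain m
  have hcomp := h1.comp h2 (fun a b h => by exfalso; rcases h with h | h <;> omega)
  rw [show (c - m) + e + m = c + e by omega,
    show ((r*t:ℕ):ℤ) + (m:ℤ) = (m:ℤ) + ((r*t:ℕ):ℤ) by ring,
    show t + 0 = t by omega] at hcomp
  refine hcomp.congr (fun x y => ?_)
  show phis r p m x y * (phis r p (c-m) (x + (m:ℕ)) (y - ((0:ℕ):ℤ)) * ffc (y - ((0:ℕ):ℤ)) e)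
      = bsym r p c e x y
  rw [show y - ((0:ℕ):ℤ) = y by simp]
  have key : phis r p c x y = phis r p m x y * phis r p (c-m) (x + (m:ℕ)) y := by
    have h := phis_add (r := r) (p := p) m (c - m) x y
    rwa [show m + (c - m) = c by omega] at h
  rw [bsym, key]
  ring

lemma spanFF_le_spanB {t n : ℕ} :
    Submodule.span ℂ (FFset t n) ≤ Submodule.span ℂ (Bset r p t n) := by
  rw [Submodule.span_le]
  rintro σ ⟨c, e, h1, h2, rfl⟩
  exact Submodule.span_mono (Bset_mono h2) (ffsym_mem_spanB h1)

/-! ### coefficient extraction helpers -/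

lemma coeff_monoZ (x y : ℤ) (A B : ℕ) :
    coeff (fs A B) (monoZ x y) = if x = (A:ℤ) ∧ y = (B:ℤ) then 1 else 0 := by
  rw [monoZ]
  split_ifs with h1 h2 h2
  · rw [coeff_mono, if_pos]
    congr 1 <;> omega
  · rw [coeff_mono, if_neg]
    intro hcon
    obtain ⟨e1, e2⟩ := fs_inj hcon
    omega
  · exfalso
    omega
  · simp

lemma elem_action_monoZ (s : Fin 2 →₀ ℕ) (μ : ℂ) (i j a b : ℕ) :
    (Mf (monomial s μ) * Dx ^ i * Dy ^ j) (mono a b)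
      = (μ * ffc (a:ℤ) i * ffc (b:ℤ) j) •
          monoZ ((a:ℤ) + ((s 0 : ℤ) - (i:ℤ))) ((b:ℤ) + ((s 1 : ℤ) - (j:ℤ))) := by
  rw [elem_action]
  by_cases h : i ≤ a ∧ j ≤ b
  · rw [show (a:ℤ) + ((s 0:ℤ) - (i:ℤ)) = ((a - i + s 0 : ℕ):ℤ) by omega,
      show (b:ℤ) + ((s 1:ℤ) - (j:ℤ)) = ((b - j + s 1 : ℕ):ℤ) by omega, monoZ_natCast]
  · rcases not_and_or.1 h with h' | h'
    · rw [ffc_nat_lt (show a < i by omega)]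
      simp
    · rw [ffc_nat_lt (show b < j by omega)]
      simp

lemma Mf_sum {ι : Type*} (A : Finset ι) (g : ι → R2) :
    Mf (∑ s ∈ A, g s) = ∑ s ∈ A, Mf (g s) := by
  refine LinearMap.ext fun z => ?_
  show (∑ s ∈ A, g s) * z = _
  rw [Finset.sum_mul]
  rw [LinearMap.sum_apply]
  rfl

end S13
namespace S13
open Finset MvPolynomial

/-! ### Grouping the operator by bidegree shifts -/

def Iset (r p q k : ℕ) : Finset (ℕ × ℕ) :=
  (sIdx r p q).filter (fun ij => ij.1 + ij.2 ≤ k)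

def sh (ij : ℕ × ℕ) (s : Fin 2 →₀ ℕ) : ℤ × ℤ :=
  ((s 0 : ℤ) - ij.1, (s 1 : ℤ) - ij.2)

variable (r p q k : ℕ) (f : ℕ × ℕ → R2)

def Eop (ij : ℕ × ℕ) (s : Fin 2 →₀ ℕ) : Module.End ℂ R2 :=
  Mf (monomial s (coeff s (f ij))) * Dx ^ ij.1 * Dy ^ ij.2

def UVs : Finset (ℤ × ℤ) :=
  (Iset r p q k).biUnion (fun ij => (f ij).support.image (sh ij))

noncomputable def TG (uv : ℤ × ℤ) : Module.End ℂ R2 :=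
  ∑ ij ∈ Iset r p q k, ∑ s ∈ (f ij).support.filter (fun s => sh ij s = uv), Eop f ij s

noncomputable def lamb (uv : ℤ × ℤ) : F := fun x y =>
  ∑ ij ∈ Iset r p q k, ∑ s ∈ (f ij).support.filter (fun s => sh ij s = uv),
    coeff s (f ij) * (ffc x ij.1 * ffc y ij.2)

variable {r p q k f}

lemma Iset_spec {ij : ℕ × ℕ} (h : ij ∈ Iset r p q k) :
    ij.1 + r * ij.2 ≤ p ∧ ij.2 ≤ q ∧ ij.1 + ij.2 ≤ k := by
  rw [Iset, Finset.mem_filter, sIdx, Finset.mem_filter, Finset.mem_product,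
    Finset.mem_range, Finset.mem_range] at h
  exact ⟨h.1.2, by omega, h.2⟩

lemma T_eq_sum_TG :
    (∑ ij ∈ Iset r p q k, Mf (f ij) * Dx ^ ij.1 * Dy ^ ij.2)
      = ∑ uv ∈ UVs r p q k f, TG r p q k f uv := by
  have h1 : (∑ ij ∈ Iset r p q k, Mf (f ij) * Dx ^ ij.1 * Dy ^ ij.2)
      = ∑ ij ∈ Iset r p q k, ∑ s ∈ (f ij).support, Eop f ij s := by
    apply Finset.sum_congr rfl
    intro ij _
    conv_lhs => rw [← support_sum_monomial_coeff (f ij)]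
    rw [Mf_sum, Finset.sum_mul, Finset.sum_mul]
    rfl
  rw [h1]
  simp only [TG]
  rw [Finset.sum_comm]
  apply Finset.sum_congr rfl
  intro ij hij
  exact (Finset.sum_fiberwise_of_maps_to
    (fun s hs => Finset.mem_biUnion.2 ⟨ij, hij, Finset.mem_image_of_mem _ hs⟩) _).symm

lemma TG_apply (uv : ℤ × ℤ) (a b : ℕ) :
    TG r p q k f uv (mono a b)
      = lamb r p q k f uv (a:ℤ) (b:ℤ) • monoZ ((a:ℤ) + uv.1) ((b:ℤ) + uv.2) := by
  rw [TG, LinearMap.sum_apply]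
  have hinner : ∀ ij ∈ Iset r p q k,
      (∑ s ∈ (f ij).support.filter (fun s => sh ij s = uv), Eop f ij s) (mono a b)
      = (∑ s ∈ (f ij).support.filter (fun s => sh ij s = uv),
          coeff s (f ij) * (ffc (a:ℤ) ij.1 * ffc (b:ℤ) ij.2))
        • monoZ ((a:ℤ) + uv.1) ((b:ℤ) + uv.2) := by
    intro ij _
    rw [LinearMap.sum_apply, Finset.sum_smul]
    apply Finset.sum_congr rfl
    intro s hs
    rw [Finset.mem_filter] at hs
    have h1 : (s 0 : ℤ) - ij.1 = uv.1 := by rw [← hs.2]; rfl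
    have h2 : (s 1 : ℤ) - ij.2 = uv.2 := by rw [← hs.2]; rfl
    rw [Eop, elem_action_monoZ, h1, h2, mul_assoc]
  rw [Finset.sum_congr rfl hinner, ← Finset.sum_smul]
  rfl

lemma lamb_eq_zero_of_not_mem {uv : ℤ × ℤ} (h : uv ∉ UVs r p q k f) (x y : ℤ) :
    lamb r p q k f uv x y = 0 := by
  rw [lamb]
  apply Finset.sum_eq_zero
  intro ij hij
  apply Finset.sum_eq_zero
  intro s hs
  rw [Finset.mem_filter] at hs
  exfalso
  exact h (Finset.mem_biUnion.2 ⟨ij, hij, hs.2 ▸ Finset.mem_image_of_mem _ hs.1⟩)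

lemma lamb_eq_zero_of_neg {uv : ℤ × ℤ} (a b : ℕ)
    (h : (a:ℤ) + uv.1 < 0 ∨ (b:ℤ) + uv.2 < 0) :
    lamb r p q k f uv (a:ℤ) (b:ℤ) = 0 := by
  rw [lamb]
  apply Finset.sum_eq_zero
  intro ij hij
  apply Finset.sum_eq_zero
  intro s hs
  rw [Finset.mem_filter] at hs
  have h1 : (s 0 : ℤ) - ij.1 = uv.1 := by rw [← hs.2]; rfl
  have h2 : (s 1 : ℤ) - ij.2 = uv.2 := by rw [← hs.2]; rfl
  rcases h with h | h
  · have : a < ij.1 := by omega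
    rw [ffc_nat_lt this, zero_mul, mul_zero]
  · have : b < ij.2 := by omega
    rw [ffc_nat_lt this, mul_zero, mul_zero]

lemma coeff_T_apply (a b A B : ℕ) :
    coeff (fs A B) ((∑ uv ∈ UVs r p q k f, TG r p q k f uv) (mono a b))
      = lamb r p q k f ((A:ℤ) - a, (B:ℤ) - b) (a:ℤ) (b:ℤ) := by
  classical
  rw [LinearMap.sum_apply]
  rw [coeff_sum]
  have h1 : ∀ uv ∈ UVs r p q k f,
      coeff (fs A B) (TG r p q k f uv (mono a b))
        = if uv = ((A:ℤ) - a, (B:ℤ) - b) then lamb r p q k f uv (a:ℤ) (b:ℤ) else 0 := by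
    intro uv _
    rw [TG_apply, coeff_smul, coeff_monoZ, smul_eq_mul]
    by_cases h : uv = ((A:ℤ) - a, (B:ℤ) - b)
    · rw [if_pos h, if_pos, mul_one]
      constructor
      · rw [h]; ring
      · rw [h]; ring
    · rw [if_neg h, if_neg, mul_zero]
      intro hcon
      apply h
      have e1 : uv.1 = (A:ℤ) - a := by omega
      have e2 : uv.2 = (B:ℤ) - b := by omega
      exact Prod.ext e1 e2
  rw [Finset.sum_congr rfl h1, Finset.sum_ite_eq' (UVs r p q k f) ((A:ℤ) - a, (B:ℤ) - b)]
  by_cases h : ((A:ℤ) - a, (B:ℤ) - b) ∈ UVs r p q k f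
  · rw [if_pos h]
  · rw [if_neg h, lamb_eq_zero_of_not_mem h]

end S13
namespace S13
open Finset MvPolynomial

variable {r p q k : ℕ} {f : ℕ × ℕ → R2}

lemma per_uv (hr : 2 ≤ r) (hq : r * q ≤ p)
    (hy0 : ∀ uv : ℤ × ℤ, 0 < uv.2 → ∀ a b : ℕ, lamb r p q k f uv (a:ℤ) (b:ℤ) = 0)
    (hp0 : ∀ (uv : ℤ × ℤ) (a b : ℕ), a + r * b ≤ p → b ≤ q →
      (p:ℤ) < ((a:ℤ) + uv.1) + (r:ℤ) * ((b:ℤ) + uv.2) →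
      lamb r p q k f uv (a:ℤ) (b:ℤ) = 0)
    (uv : ℤ × ℤ) :
    ∃ P, P ∈ Submodule.span ℂ (prodsLE k (Wset r p)) ∧
      ((∀ a b : ℕ, a + r * b ≤ p → b ≤ q →
        TG r p q k f uv (mono a b) = P (mono a b)) ∧
      (k ≤ q → TG r p q k f uv = P)) := by
  classical
  rcases lt_or_ge 0 uv.2 with hv | hv
  · refine ⟨0, Submodule.zero_mem _, ?_, ?_⟩
    · intro a b _ _
      rw [TG_apply, hy0 uv hv a b, zero_smul, LinearMap.zero_apply]
    · intro _
      apply opext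
      intro a b
      rw [TG_apply, hy0 uv hv a b, zero_smul, LinearMap.zero_apply]
  · set t : ℕ := (-uv.2).toNat with htdef
    have htv : (t:ℤ) = -uv.2 := Int.toNat_of_nonneg (by omega)
    have hterm : ∀ ij ∈ Iset r p q k, ∀ s ∈ (f ij).support.filter (fun s => sh ij s = uv),
        t ≤ ij.2 ∧ ij.1 + ij.2 ≤ k ∧ -(ij.1:ℤ) ≤ uv.1 := by
      intro ij hij s hs
      rw [Finset.mem_filter] at hs
      have h1 : (s 0 : ℤ) - ij.1 = uv.1 := by rw [← hs.2]; rfl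
      have h2 : (s 1 : ℤ) - ij.2 = uv.2 := by rw [← hs.2]; rfl
      exact ⟨by omega, (Iset_spec hij).2.2, by omega⟩
    have hlamFF : lamb r p q k f uv ∈ Submodule.span ℂ (FFset t k) := by
      have hfun : lamb r p q k f uv
          = ∑ ij ∈ Iset r p q k, ∑ s ∈ (f ij).support.filter (fun s => sh ij s = uv),
              coeff s (f ij) • ffsym ij.1 ij.2 := by
        funext x y
        rw [lamb]
        simp [Finset.sum_apply, Pi.smul_apply, smul_eq_mul, ffsym]
      rw [hfun]
      apply Submodule.sum_mem
      intro ij hij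
      apply Submodule.sum_mem
      intro s hs
      exact Submodule.smul_mem _ _ (Submodule.subset_span
        ⟨ij.1, ij.2, (hterm ij hij s hs).1, (hterm ij hij s hs).2.1, rfl⟩)
    rcases le_or_gt uv.1 ((r:ℤ) * t) with hm | hm
    · -- nonpositive weight shift : exact termwise realization
      have hreal : IsReal r p k uv.1 t
          (fun x y => ∑ ij ∈ Iset r p q k,
            (fun x y => ∑ s ∈ (f ij).support.filter (fun s => sh ij s = uv),
              (fun x y => coeff s (f ij) * ffsym ij.1 ij.2 x y : F) x y : F) x y) := by
        apply isReal_sum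
        intro ij hij
        apply isReal_sum
        intro s hs
        have hfacts := hterm ij hij s hs
        exact ((isReal_ffsym ij.1 ij.2 t uv.1 hfacts.1 hm hfacts.2.2).smul
          (coeff s (f ij))).mono_n hfacts.2.1
      have hreal2 : IsReal r p k uv.1 t (lamb r p q k f uv) :=
        hreal.congr (fun x y => by rw [lamb]; simp [ffsym])
      obtain ⟨P, hPmem, hPact⟩ := hreal2
      refine ⟨P, hPmem, ?_, ?_⟩
      · intro a b _ _
        rw [TG_apply, hPact, show (b:ℤ) + uv.2 = (b:ℤ) - (t:ℤ) by omega]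
      · intro _
        apply opext
        intro a b
        rw [TG_apply, hPact, show (b:ℤ) + uv.2 = (b:ℤ) - (t:ℤ) by omega]
    · -- positive weight shift m
      set m : ℕ := (uv.1 - (r:ℤ) * t).toNat with hmdef
      have hmu : (m:ℤ) = uv.1 - (r:ℤ) * t := Int.toNat_of_nonneg (by linarith)
      have hm1 : 1 ≤ m := by
        have h1 : (1:ℤ) ≤ (m:ℤ) := by rw [hmu]; linarith
        exact_mod_cast h1
      obtain ⟨h, hrep⟩ := rep_of_mem_spanB (spanFF_le_spanB (r := r) (p := p) hlamFF)
      have hJspec : ∀ ce ∈ Jset t k, t ≤ ce.2 ∧ ce.1 + ce.2 ≤ k := by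
        intro ce hce
        rw [Jset, Finset.mem_filter, Finset.mem_product, Finset.mem_range, Finset.mem_Icc] at hce
        exact ⟨hce.1.2.1, hce.2⟩
      set Smu := (Jset t k).filter (fun ce => m ≤ ce.1) with hSmuDef
      set Snot := (Jset t k).filter (fun ce => ¬ m ≤ ce.1) with hSnotDef
      set Srest := Snot.filter (fun ce => ce.1 + r * ce.2 ≤ p ∧ ce.2 ≤ q) with hSrestDef
      set Skap := Snot.filter (fun ce => ¬ (ce.1 + r * ce.2 ≤ p ∧ ce.2 ≤ q)) with hSkapDef
      have hrestzero : ∀ ce ∈ Srest, h ce = 0 := by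
        apply vanish (q := q) (t := t) (m := m) (k := k) (show 0 < r by omega) h Srest
        · intro ce hce
          rw [hSrestDef, Finset.mem_filter, hSnotDef, Finset.mem_filter] at hce
          have hj := hJspec ce hce.1.1
          exact ⟨by omega, hce.2.1, hce.2.2, hj.1, hj.2⟩
        · intro j b hjm htb hbq hjrb
          set a : ℕ := p - j - r * b with hadef
          have haz : (a:ℤ) = (p:ℤ) - (j:ℤ) - (r:ℤ) * (b:ℤ) := by
            rw [hadef, Nat.sub_sub, Nat.cast_sub hjrb]
            push_cast
            ring
          have hab : a + r * b ≤ p := by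
            rw [hadef, Nat.sub_sub]
            omega
          have hlz : lamb r p q k f uv (a:ℤ) (b:ℤ) = 0 := by
            apply hp0 uv a b hab hbq
            rw [haz]
            have huv2 : uv.2 = -(t:ℤ) := by omega
            have hru : (r:ℤ) * ((b:ℤ) + uv.2) = (r:ℤ)*(b:ℤ) - (r:ℤ)*(t:ℤ) := by
              rw [huv2]; ring
            have hjm' : (j:ℤ) < (m:ℤ) := by exact_mod_cast hjm
            rw [hru]
            linarith [hmu]
          have hfull : ∑ ce ∈ Jset t k,
              h ce * (phis r p ce.1 ((p:ℤ) - (j:ℤ) - (r:ℤ)*(b:ℤ)) (b:ℤ)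
                * ffc (b:ℤ) ce.2) = 0 := by
            have hc := congrFun (congrFun hrep ((p:ℤ) - (j:ℤ) - (r:ℤ)*(b:ℤ))) (b:ℤ)
            rw [← haz, hlz] at hc
            have hc2 : (∑ ce ∈ Jset t k, (h ce • bsym r p ce.1 ce.2 : F)) (a:ℤ) (b:ℤ)
                = ∑ ce ∈ Jset t k, h ce * (phis r p ce.1 (a:ℤ) (b:ℤ) * ffc (b:ℤ) ce.2) := by
              simp [Finset.sum_apply, Pi.smul_apply, smul_eq_mul, bsym]
            rw [← haz, ← hc2]
            exact hc.symm
          -- split the full sum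
          set G : ℕ × ℕ → ℂ := fun ce =>
            h ce * (phis r p ce.1 ((p:ℤ) - (j:ℤ) - (r:ℤ)*(b:ℤ)) (b:ℤ) * ffc (b:ℤ) ce.2)
            with hGdef
          have hfact0 : ∀ c' : ℕ, j < c' →
              phis r p c' ((p:ℤ) - (j:ℤ) - (r:ℤ)*(b:ℤ)) (b:ℤ) = 0 := by
            intro c' hjc
            apply Finset.prod_eq_zero (Finset.mem_range.2 hjc)
            push_cast
            ring
          have hSmu0 : ∑ ce ∈ Smu, G ce = 0 := by
            apply Finset.sum_eq_zero
            intro ce hce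
            rw [hSmuDef, Finset.mem_filter] at hce
            simp only [hGdef]
            rw [hfact0 ce.1 (by omega), zero_mul, mul_zero]
          have hSkap0 : ∑ ce ∈ Skap, G ce = 0 := by
            apply Finset.sum_eq_zero
            intro ce hce
            rw [hSkapDef, Finset.mem_filter, hSnotDef, Finset.mem_filter] at hce
            simp only [hGdef]
            rcases not_and_or.1 hce.2 with hc1 | hc2
            · -- p < c + r e
              push_neg at hc1
              rcases lt_or_ge b ce.2 with hb | hb
              · rw [ffc_nat_lt hb, mul_zero, mul_zero]
              · have hre : r * ce.2 ≤ r * b := Nat.mul_le_mul_left r hb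
                have hjc : j < ce.1 := by
                  have h1 : p < ce.1 + r * ce.2 := hc1
                  have h2 : j + r * b ≤ p := hjrb
                  omega
                rw [hfact0 ce.1 hjc, zero_mul, mul_zero]
            · push_neg at hc2
              rw [ffc_nat_lt (by omega), mul_zero, mul_zero]
          have hsplit1 := Finset.sum_filter_add_sum_filter_not (Jset t k)
            (fun ce => m ≤ ce.1) G
          have hsplit2 := Finset.sum_filter_add_sum_filter_not Snot
            (fun ce => ce.1 + r * ce.2 ≤ p ∧ ce.2 ≤ q) G
          have hfin : ∑ ce ∈ Srest, G ce
              = (∑ ce ∈ Jset t k, G ce) - (∑ ce ∈ Smu, G ce) - (∑ ce ∈ Skap, G ce) := by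
            rw [← hsplit1, ← hsplit2]
            ring
          simp only [hGdef] at hfin
          rw [hfin, hfull, hSmu0, hSkap0]
          ring
      -- the two remaining parts
      set μF : F := ∑ ce ∈ Smu, (h ce • bsym r p ce.1 ce.2 : F) with hμFdef
      set κF : F := ∑ ce ∈ Skap, (h ce • bsym r p ce.1 ce.2 : F) with hκFdef
      have hrestF : (∑ ce ∈ Srest, (h ce • bsym r p ce.1 ce.2 : F)) = 0 := by
        apply Finset.sum_eq_zero
        intro ce hce
        rw [hrestzero ce hce, zero_smul]
      have hlamsplit : lamb r p q k f uv = μF + κF := by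
        rw [hrep,
          ← Finset.sum_filter_add_sum_filter_not (Jset t k) (fun ce => m ≤ ce.1)
            (fun ce => (h ce • bsym r p ce.1 ce.2 : F)),
          ← Finset.sum_filter_add_sum_filter_not Snot
            (fun ce => ce.1 + r * ce.2 ≤ p ∧ ce.2 ≤ q)
            (fun ce => (h ce • bsym r p ce.1 ce.2 : F)),
          hrestF, zero_add]
      -- realization of μF
      have hrealμ : IsReal r p k uv.1 t
          (fun x y => ∑ ce ∈ Smu, (h ce • bsym r p ce.1 ce.2 : F) x y) := by
        apply isReal_sum
        intro ce hce
        rw [hSmuDef, Finset.mem_filter] at hce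
        have hj := hJspec ce hce.1
        have hb := isReal_bsym (r := r) (p := p) (t := t) (c := ce.1) (e := ce.2) (m := m)
          hj.1 hce.2
        have heq : (m:ℤ) + ((r * t : ℕ):ℤ) = uv.1 := by push_cast; linarith [hmu]
        rw [heq] at hb
        exact ((hb.smul (h ce)).mono_n hj.2).congr (fun x y => by simp)
      have hrealμ2 : IsReal r p k uv.1 t μF :=
        hrealμ.congr (fun x y => by rw [hμFdef]; simp [Finset.sum_apply])
      obtain ⟨P, hPmem, hPact⟩ := hrealμ2
      -- κF vanishes on the staircase
      have hκval : ∀ a b : ℕ, a + r * b ≤ p → b ≤ q → κF (a:ℤ) (b:ℤ) = 0 := by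
        intro a b hab hbq
        rw [hκFdef]
        simp only [Finset.sum_apply, Pi.smul_apply, smul_eq_mul]
        apply Finset.sum_eq_zero
        intro ce hce
        rw [hSkapDef, Finset.mem_filter, hSnotDef, Finset.mem_filter] at hce
        rcases not_and_or.1 hce.2 with hc1 | hc2
        · push_neg at hc1
          rcases lt_or_ge b ce.2 with hb | hb
          · rw [bsym]
            rw [ffc_nat_lt hb, mul_zero, mul_zero]
          · have hre : r * ce.2 ≤ r * b := Nat.mul_le_mul_left r hb
            have hi₀ : p - a - r * b < ce.1 := by omega
            have hsum : a + r * b + (p - a - r * b) = p := by omega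
            have hfz : phis r p ce.1 (a:ℤ) (b:ℤ) = 0 := by
              apply Finset.prod_eq_zero (Finset.mem_range.2 hi₀)
              have hC := congrArg (fun n : ℕ => (n:ℂ)) hsum
              push_cast at hC
              push_cast
              linear_combination hC
            rw [bsym, hfz, zero_mul, mul_zero]
        · push_neg at hc2
          rw [bsym, ffc_nat_lt (by omega), mul_zero, mul_zero]
      refine ⟨P, hPmem, ?_, ?_⟩
      · intro a b hab hbq
        rw [TG_apply, hPact, show (b:ℤ) + uv.2 = (b:ℤ) - (t:ℤ) by omega]
        congr 1
        have hsp := congrFun (congrFun hlamsplit (a:ℤ)) (b:ℤ)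
        simp only [Pi.add_apply] at hsp
        rw [hsp, hκval a b hab hbq, add_zero]
      · intro hkq
        have hκe : Skap = ∅ := by
          rw [hSkapDef]
          rw [Finset.filter_eq_empty_iff]
          intro ce hce
          rw [hSnotDef, Finset.mem_filter] at hce
          have hj := hJspec ce hce.1
          intro hcon
          apply hcon
          constructor
          · have h1 : ce.1 + ce.2 ≤ q := le_trans hj.2 hkq
            have h2 : ce.1 ≤ r * ce.1 := Nat.le_mul_of_pos_left ce.1 (by omega)
            have h3 : ce.1 + r * ce.2 ≤ r * ce.1 + r * ce.2 := by omega
            have h4 : r * ce.1 + r * ce.2 = r * (ce.1 + ce.2) := by ring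
            have h5 : r * (ce.1 + ce.2) ≤ r * q := Nat.mul_le_mul_left r h1
            omega
          · omega
        have hκ0 : κF = 0 := by
          rw [hκFdef, hκe, Finset.sum_empty]
        apply opext
        intro a b
        rw [TG_apply, hPact, show (b:ℤ) + uv.2 = (b:ℤ) - (t:ℤ) by omega]
        congr 1
        have hsp := congrFun (congrFun hlamsplit (a:ℤ)) (b:ℤ)
        simp only [Pi.add_apply] at hsp
        rw [hsp, hκ0]
        simp

end S13
theorem stmt13 (r p q k : ℕ) (hr : 2 ≤ r) (hq : r * q ≤ p) (f : ℕ × ℕ → R2)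
    (T : Module.End ℂ R2)
    (hT : T = ∑ ij ∈ (sIdx r p q).filter (fun ij => ij.1 + ij.2 ≤ k),
      Mf (f ij) * Dx ^ ij.1 * Dy ^ ij.2)
    (hpres : ∀ v ∈ Smod r p q, T v ∈ Smod r p q)
    (hy : NonposY T) :
    ∃ P ∈ Submodule.span ℂ (prodsLE k (Wset r p)),
      (∀ v ∈ Smod r p q, T v = P v) ∧ (k ≤ q → T = P) := by
  classical
  open S13 in
  have hT' : T = ∑ uv ∈ UVs r p q k f, TG r p q k f uv := by
    rw [hT]
    exact T_eq_sum_TG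
  have hcoeff : ∀ a b A B : ℕ,
      MvPolynomial.coeff (fs A B) (T (mono a b))
        = lamb r p q k f ((A:ℤ) - a, (B:ℤ) - b) (a:ℤ) (b:ℤ) := by
    intro a b A B
    rw [hT']
    exact coeff_T_apply a b A B
  have hy0 : ∀ uv : ℤ × ℤ, 0 < uv.2 → ∀ a b : ℕ, lamb r p q k f uv (a:ℤ) (b:ℤ) = 0 := by
    intro uv hv a b
    rcases lt_or_ge ((a:ℤ) + uv.1) 0 with hneg | hpos
    · exact lamb_eq_zero_of_neg a b (Or.inl hneg)
    · set A := ((a:ℤ) + uv.1).toNat with hA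
      set B := ((b:ℤ) + uv.2).toNat with hB
      have hA' : (A:ℤ) = (a:ℤ) + uv.1 := Int.toNat_of_nonneg hpos
      have hB' : (B:ℤ) = (b:ℤ) + uv.2 := Int.toNat_of_nonneg (by omega)
      have huv : ((A:ℤ) - a, (B:ℤ) - b) = uv := Prod.ext (by omega) (by omega)
      have hc := hcoeff a b A B
      rw [huv] at hc
      by_contra hne
      have hmem : fs A B ∈ (T (mono a b)).support :=
        MvPolynomial.mem_support_iff.2 (by rw [hc]; exact hne)
      have hyab := hy a b
      rw [XY_eq_mono] at hyab
      have hsupp := nonposY_le_suppSub b hyab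
      have hle : (fs A B) 1 ≤ b := hsupp (fs A B) hmem
      rw [fs_apply1] at hle
      omega
  have hp0 : ∀ (uv : ℤ × ℤ) (a b : ℕ), a + r * b ≤ p → b ≤ q →
      (p:ℤ) < ((a:ℤ) + uv.1) + (r:ℤ) * ((b:ℤ) + uv.2) →
      lamb r p q k f uv (a:ℤ) (b:ℤ) = 0 := by
    intro uv a b hab hbq hbig
    rcases lt_or_ge ((a:ℤ) + uv.1) 0 with hneg | hpos
    · exact lamb_eq_zero_of_neg a b (Or.inl hneg)
    · rcases lt_or_ge ((b:ℤ) + uv.2) 0 with hneg' | hpos'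
      · exact lamb_eq_zero_of_neg a b (Or.inr hneg')
      · set A := ((a:ℤ) + uv.1).toNat with hA
        set B := ((b:ℤ) + uv.2).toNat with hB
        have hA' : (A:ℤ) = (a:ℤ) + uv.1 := Int.toNat_of_nonneg hpos
        have hB' : (B:ℤ) = (b:ℤ) + uv.2 := Int.toNat_of_nonneg hpos'
        have huv : ((A:ℤ) - a, (B:ℤ) - b) = uv := Prod.ext (by omega) (by omega)
        have hc := hcoeff a b A B
        rw [huv] at hc
        by_contra hne
        have hmem : fs A B ∈ (T (mono a b)).support :=
          MvPolynomial.mem_support_iff.2 (by rw [hc]; exact hne)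
        have hTmem : T (mono a b) ∈ Smod r p q := by
          apply hpres
          exact mono_mem_Smod hab hbq
        have hsupp := Smod_le_suppSub r p q hTmem
        have hcond := hsupp (fs A B) hmem
        simp only [Set.mem_setOf_eq, fs_apply0, fs_apply1] at hcond
        have hcast : ((A + r * B : ℕ) : ℤ) ≤ (p:ℤ) := by exact_mod_cast hcond.1
        have hprod : ((r * B : ℕ) : ℤ) = (r:ℤ) * (B:ℤ) := by push_cast; ring
        push_cast at hcast
        rw [hA', hB'] at hcast
        linarith
  have key : ∀ uv : ℤ × ℤ, ∃ P, P ∈ Submodule.span ℂ (prodsLE k (Wset r p)) ∧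
      ((∀ a b : ℕ, a + r * b ≤ p → b ≤ q →
        TG r p q k f uv (mono a b) = P (mono a b)) ∧
      (k ≤ q → TG r p q k f uv = P)) := per_uv hr hq hy0 hp0
  choose g hg1 hg2 using key
  refine ⟨∑ uv ∈ UVs r p q k f, g uv,
    Submodule.sum_mem _ (fun uv _ => hg1 uv), ?_, ?_⟩
  · intro v hv
    have hgen : ∀ a b : ℕ, a + r * b ≤ p → b ≤ q →
        T (mono a b) = (∑ uv ∈ UVs r p q k f, g uv) (mono a b) := by
      intro a b hab hbq
      rw [hT', LinearMap.sum_apply, LinearMap.sum_apply]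
      exact Finset.sum_congr rfl (fun uv _ => (hg2 uv).1 a b hab hbq)
    have hle : Smod r p q ≤ LinearMap.eqLocus T (∑ uv ∈ UVs r p q k f, g uv) := by
      rw [Smod, Submodule.span_le]
      rintro P ⟨i, j, hij, hj, rfl⟩
      rw [SetLike.mem_coe, LinearMap.mem_eqLocus, XY_eq_mono]
      exact hgen i j hij hj
    exact hle hv
  · intro hkq
    rw [hT']
    exact Finset.sum_congr rfl (fun uv _ => (hg2 uv).2 hkq)
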